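/- In the Kharlamova system, define new variables ω_1 = ((I_1+I_n)/B_1)Ω_{1n}, ω_i = ((I_i+I_n)/B_i)Ω_{in} − ((I_1+I_n)/B_1)Ω_{1n} for 2 ≤ i ≤ n-1, γ_1 = −((I_1+I_n)/B_1)Γ_1, γ_i = −((I_i+I_n)/B_i)Γ_i + ((I_1+I_n)/B_1)Γ_1 for 2 ≤ i ≤ n-1, and γ_n = Γ_n. Then along solutions: dω_1/dt = γ_n, dω_i/dt = 0 for i ≥ 2, dγ_i/dt = γ_n ω_i for i = 1,...,n-1, and dγ_n/dt = −(B_1/(I_1+I_n))² γ_1 ω_1 − Σ_{i=2}^{n-1} (B_i/(I_i+I_n))² (γ_1+γ_i)(ω_1+ω_i). -/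

import Mathlib

/-- In the Kharlamova system, the new variables
`ω_1 = ((I_1+I_n)/B_1)Ω_{1n}`, `ω_i = ((I_i+I_n)/B_i)Ω_{in} − ((I_1+I_n)/B_1)Ω_{1n}` (i ≥ 2),
`γ_1 = −((I_1+I_n)/B_1)Γ_1`, `γ_i = −((I_i+I_n)/B_i)Γ_i + ((I_1+I_n)/B_1)Γ_1` (i ≥ 2),
`γ_n = Γ_n` satisfy `ω̇_1 = γ_n`, `ω̇_i = 0` (i ≥ 2), `γ̇_i = γ_n ω_i`, and
`γ̇_n = −(B_1/(I_1+I_n))² γ_1 ω_1 − Σ_{i≥2} (B_i/(I_i+I_n))² (γ_1+γ_i)(ω_1+ω_i)`. -/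
theorem kharlamova_change_of_variables (m : ℕ)
    (I : Fin (m + 1) → ℝ) (In : ℝ) (hI : ∀ i, 0 < I i) (hIn : 0 < In)
    (B : Fin (m + 1) → ℝ) (hB : ∀ i, B i ≠ 0)
    (Ω : Fin (m + 1) → ℝ → ℝ) (Γ : Fin (m + 1) → ℝ → ℝ) (Γn : ℝ → ℝ)
    (hΩ : ∀ i t, HasDerivAt (Ω i) (B i * Γn t / (I i + In)) t)
    (hΓ : ∀ i t, HasDerivAt (Γ i) (-(Γn t * Ω i t)) t)
    (hΓn : ∀ t, HasDerivAt Γn (∑ i, Γ i t * Ω i t) t)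
    (ω γ : Fin (m + 1) → ℝ → ℝ)
    (hω0 : ∀ t, ω 0 t = ((I 0 + In) / B 0) * Ω 0 t)
    (hωi : ∀ i, i ≠ 0 → ∀ t,
      ω i t = ((I i + In) / B i) * Ω i t - ((I 0 + In) / B 0) * Ω 0 t)
    (hγ0 : ∀ t, γ 0 t = -(((I 0 + In) / B 0) * Γ 0 t))
    (hγi : ∀ i, i ≠ 0 → ∀ t,
      γ i t = -(((I i + In) / B i) * Γ i t) + ((I 0 + In) / B 0) * Γ 0 t) :
    (∀ t, HasDerivAt (ω 0) (Γn t) t) ∧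
    (∀ i, i ≠ 0 → ∀ t, HasDerivAt (ω i) 0 t) ∧
    (∀ i t, HasDerivAt (γ i) (Γn t * ω i t) t) ∧
    (∀ t, HasDerivAt Γn
      (-((B 0 / (I 0 + In)) ^ 2 * γ 0 t * ω 0 t)
        - ∑ i ∈ Finset.univ.erase 0,
            (B i / (I i + In)) ^ 2 * (γ 0 t + γ i t) * (ω 0 t + ω i t)) t) := by
  have hIne : ∀ i, I i + In ≠ 0 := fun i => ne_of_gt (add_pos (hI i) hIn)
  have hω0f : ω 0 = fun t => ((I 0 + In) / B 0) * Ω 0 t := funext hω0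
  have part1 : ∀ t, HasDerivAt (ω 0) (Γn t) t := by
    intro t
    have h := (hΩ 0 t).const_mul ((I 0 + In) / B 0)
    rw [hω0f]
    convert h using 1
    any_goals rfl
    field_simp [hB 0, hIne 0]
  have part2 : ∀ i, i ≠ 0 → ∀ t, HasDerivAt (ω i) 0 t := by
    intro i hi t
    have h := ((hΩ i t).const_mul ((I i + In) / B i)).sub
      ((hΩ 0 t).const_mul ((I 0 + In) / B 0))
    have hf : ω i = fun t => ((I i + In) / B i) * Ω i t - ((I 0 + In) / B 0) * Ω 0 t :=
      funext (hωi i hi)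
    rw [hf]
    convert h using 1
    any_goals rfl
    field_simp [hB 0, hB i, hIne 0, hIne i]
    ring
  have part3 : ∀ i t, HasDerivAt (γ i) (Γn t * ω i t) t := by
    intro i t
    by_cases hi : i = 0
    · subst hi
      have h := ((hΓ 0 t).const_mul ((I 0 + In) / B 0)).neg
      have hf : γ 0 = fun t => -(((I 0 + In) / B 0) * Γ 0 t) := funext hγ0
      rw [hf]
      convert h using 1
      any_goals rfl
      rw [hω0 t]; ring
    · have h := (((hΓ i t).const_mul ((I i + In) / B i)).neg).add
        ((hΓ 0 t).const_mul ((I 0 + In) / B 0))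
      have hf : γ i = fun t =>
          -(((I i + In) / B i) * Γ i t) + ((I 0 + In) / B 0) * Γ 0 t :=
        funext (hγi i hi)
      rw [hf]
      convert h using 1
      any_goals rfl
      rw [hωi i hi t]; ring
  refine ⟨part1, part2, part3, fun t => ?_⟩
  have key : (∑ i, Γ i t * Ω i t)
      = -((B 0 / (I 0 + In)) ^ 2 * γ 0 t * ω 0 t)
        - ∑ i ∈ Finset.univ.erase 0,
            (B i / (I i + In)) ^ 2 * (γ 0 t + γ i t) * (ω 0 t + ω i t) := by
    rw [← Finset.add_sum_erase Finset.univ _ (Finset.mem_univ 0)]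
    have h0 : Γ 0 t * Ω 0 t = -((B 0 / (I 0 + In)) ^ 2 * γ 0 t * ω 0 t) := by
      rw [hγ0 t, hω0 t]
      field_simp [hB 0, hIne 0]
    have hi : ∀ i ∈ Finset.univ.erase 0, Γ i t * Ω i t
        = -((B i / (I i + In)) ^ 2 * (γ 0 t + γ i t) * (ω 0 t + ω i t)) := by
      intro i hmem
      have hine : i ≠ 0 := Finset.ne_of_mem_erase hmem
      have hdc : B i / (I i + In) * ((I i + In) / B i) = 1 := by
        rw [div_mul_div_comm, mul_comm]
        exact div_self (mul_ne_zero (hIne i) (hB i))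
      rw [hγi i hine t, hωi i hine t, hγ0 t, hω0 t]
      linear_combination (-(Γ i t * Ω i t) *
        (B i / (I i + In) * ((I i + In) / B i) + 1)) * hdc
    rw [h0, Finset.sum_congr rfl hi, Finset.sum_neg_distrib]
    ring
  exact key ▸ hΓn t
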